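/- Let Γ be a complex Lagrangian subspace of ℂ^{2n} (with respect to ω^ℂ) and let 𝔍 be the ℂ-linear extension of the map e_i ↦ f_i, f_i ↦ −e_i, with Hermitian inner product ⟨v,w⟩ := ω^ℂ(v, 𝔍 w̄). Then 𝔍Γ̄ := {𝔍 v̄ : v ∈ Γ} is also a complex Lagrangian subspace, and Γ and 𝔍Γ̄ are orthogonal with respect to ⟨·,·⟩; hence ℂ^{2n} = Γ ⊕ 𝔍Γ̄, and if {u_1,…,u_n} is a unitary basis of Γ then {u_1,…,u_n, 𝔍ū_1,…,𝔍ū_n} is a unitary basis of ℂ^{2n} which is also a Darboux basis for ω^ℂ. -/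

import Mathlib

/-- `ℂ^{2n}`, with coordinates indexed by `e_1,…,e_n` (`Sum.inl`) and
`f_1,…,f_n` (`Sum.inr`). -/
abbrev V (n : ℕ) := EuclideanSpace ℂ (Fin n ⊕ Fin n)

/-- The ℂ-bilinear extension `ω^ℂ` of the standard symplectic form, with
`ω(e_j, e_k) = ω(f_j, f_k) = 0` and `ω(e_j, f_k) = δ_{jk}`. -/
noncomputable def omegaC (n : ℕ) (v w : V n) : ℂ :=
  ∑ k : Fin n, (v (Sum.inl k) * w (Sum.inr k) - v (Sum.inr k) * w (Sum.inl k))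

/-- A complex Lagrangian subspace of `ℂ^{2n}`: an `n`-dimensional complex
subspace on which `ω^ℂ` vanishes. -/
def IsLagrangian (n : ℕ) (Γ : Submodule ℂ (V n)) : Prop :=
  Module.finrank ℂ Γ = n ∧ ∀ v ∈ Γ, ∀ w ∈ Γ, omegaC n v w = 0

/-- The compatible complex structure `𝔍`: `e_i ↦ f_i`, `f_i ↦ -e_i`,
extended ℂ-linearly. -/
noncomputable def Jmap (n : ℕ) : V n →ₗ[ℂ] V n where
  toFun v := WithLp.toLp 2 (fun c => match c with
    | Sum.inl k => -(v (Sum.inr k))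
    | Sum.inr k => v (Sum.inl k))
  map_add' v w := by ext c; cases c <;> simp <;> ring
  map_smul' a v := by ext c; cases c <;> simp <;> ring

instance : RingHomSurjective (starRingEnd ℂ) :=
  ⟨fun x => ⟨star x, by simp⟩⟩

/-- Coordinatewise complex conjugation (with respect to the real form
`ℝ^{2n}`), as a conjugate-linear map. -/
noncomputable def conjMap (n : ℕ) : V n →ₛₗ[starRingEnd ℂ] V n where
  toFun v := WithLp.toLp 2 (fun c => starRingEnd ℂ (v c))
  map_add' v w := by ext c; simp
  map_smul' a v := by ext c; simp

/-- The Hermitian inner product `⟨v, w⟩ := ω^ℂ(v, 𝔍 w̄)`. -/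
noncomputable def herm (n : ℕ) (v w : V n) : ℂ :=
  omegaC n v (Jmap n (conjMap n w))

section AuxLemmas

lemma T_inl (n : ℕ) (v : V n) (k : Fin n) :
    Jmap n (conjMap n v) (Sum.inl k) = -(starRingEnd ℂ) (v (Sum.inr k)) := rfl

lemma T_inr (n : ℕ) (v : V n) (k : Fin n) :
    Jmap n (conjMap n v) (Sum.inr k) = (starRingEnd ℂ) (v (Sum.inl k)) := rfl

lemma TT (n : ℕ) (v : V n) : Jmap n (conjMap n (Jmap n (conjMap n v))) = -v := by
  ext c; cases c <;> simp [T_inl, T_inr, PiLp.neg_apply]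

lemma herm_sum (n : ℕ) (v w : V n) :
    herm n v w = ∑ c : Fin n ⊕ Fin n, v c * (starRingEnd ℂ) (w c) := by
  rw [herm, omegaC, Fintype.sum_sum_type, ← Finset.sum_add_distrib]
  apply Finset.sum_congr rfl
  intro k _
  rw [show (Jmap n (conjMap n w)) (Sum.inr k) = (starRingEnd ℂ) (w (Sum.inl k)) from rfl,
    show (Jmap n (conjMap n w)) (Sum.inl k) = -((starRingEnd ℂ) (w (Sum.inr k))) from rfl]
  ring

lemma herm_conj (n : ℕ) (v w : V n) : herm n w v = (starRingEnd ℂ) (herm n v w) := by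
  simp [herm_sum, map_sum, mul_comm]

lemma omega_neg_right (n : ℕ) (v w : V n) : omegaC n v (-w) = -omegaC n v w := by
  simp only [omegaC, ← Finset.sum_neg_distrib]
  apply Finset.sum_congr rfl; intro k _
  show v _ * (-w) _ - v _ * (-w) _ = _
  simp only [PiLp.neg_apply]; ring

lemma omega_TT (n : ℕ) (v w : V n) :
    omegaC n (Jmap n (conjMap n v)) (Jmap n (conjMap n w)) = (starRingEnd ℂ) (omegaC n v w) := by
  rw [omegaC, omegaC, map_sum]
  apply Finset.sum_congr rfl; intro k _
  rw [T_inl, T_inr, T_inl, T_inr, map_sub, map_mul, map_mul]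
  ring

lemma herm_T_right (n : ℕ) (v w : V n) :
    herm n v (Jmap n (conjMap n w)) = -omegaC n v w := by
  rw [herm, TT, omega_neg_right]

lemma herm_TT (n : ℕ) (v w : V n) :
    herm n (Jmap n (conjMap n v)) (Jmap n (conjMap n w)) = (starRingEnd ℂ) (herm n v w) := by
  rw [herm, TT, omega_neg_right, herm, ← omega_TT, TT, omega_neg_right]

lemma inner_eq_conj_herm (n : ℕ) (v w : V n) :
    (inner ℂ v w : ℂ) = (starRingEnd ℂ) (herm n v w) := by
  rw [herm_sum, PiLp.inner_apply, map_sum]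
  simp [mul_comm]

lemma T_injective (n : ℕ) : Function.Injective ((Jmap n).comp (conjMap n)) := by
  intro v w h
  have h2 : Jmap n (conjMap n (Jmap n (conjMap n v))) = Jmap n (conjMap n (Jmap n (conjMap n w))) := by
    simpa using congrArg (fun x => Jmap n (conjMap n x)) h
  rw [TT, TT] at h2
  exact neg_injective h2

lemma herm_eq_omega (n : ℕ) (v w : V n) :
    omegaC n v (Jmap n (conjMap n w)) = herm n v w := rfl

end AuxLemmas

/-- If `Γ` is complex Lagrangian then so is `𝔍Γ̄`; moreover `Γ ⊥ 𝔍Γ̄` for the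
Hermitian inner product, `ℂ^{2n} = Γ ⊕ 𝔍Γ̄`, and any unitary basis
`u_1,…,u_n` of `Γ` extends to a unitary Darboux basis
`u_1,…,u_n,𝔍ū_1,…,𝔍ū_n` of `ℂ^{2n}`. -/

theorem J_conj_lagrangian (n : ℕ) (Γ : Submodule ℂ (V n))
    (hΓ : IsLagrangian n Γ) :
    IsLagrangian n (Submodule.map ((Jmap n).comp (conjMap n)) Γ) ∧
    (∀ v ∈ Γ, ∀ w ∈ Submodule.map ((Jmap n).comp (conjMap n)) Γ,
      herm n v w = 0) ∧
    IsCompl Γ (Submodule.map ((Jmap n).comp (conjMap n)) Γ) ∧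
    (∀ u : Fin n → V n, (∀ i, u i ∈ Γ) →
      (∀ i j, herm n (u i) (u j) = if i = j then 1 else 0) →
      (∀ a a' : Fin n ⊕ Fin n,
        herm n (Sum.elim u (fun i => Jmap n (conjMap n (u i))) a)
          (Sum.elim u (fun i => Jmap n (conjMap n (u i))) a') =
            if a = a' then 1 else 0) ∧
      Submodule.span ℂ
        (Set.range (Sum.elim u (fun i => Jmap n (conjMap n (u i))))) = ⊤ ∧
      (∀ i j : Fin n,
        omegaC n (u i) (u j) = 0 ∧
        omegaC n (Jmap n (conjMap n (u i))) (Jmap n (conjMap n (u j))) = 0 ∧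
        omegaC n (u i) (Jmap n (conjMap n (u j))) =
          if i = j then 1 else 0)) := by
  obtain ⟨hdim, hzero⟩ := hΓ
  set f := (Jmap n).comp (conjMap n) with hf
  have hfapp : ∀ v, f v = Jmap n (conjMap n v) := fun v => rfl
  have horth : ∀ v ∈ Γ, ∀ w ∈ Submodule.map f Γ, herm n v w = 0 := by
    rintro v hv w ⟨x, hx, rfl⟩
    rw [hfapp, herm_T_right, hzero v hv x hx, neg_zero]
  have hrank : Module.finrank ℂ (Submodule.map f Γ) = n := by
    have e := Submodule.equivMapOfInjective f (T_injective n) Γ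
    have hbij : Function.Bijective (starRingEnd ℂ) :=
      Function.Involutive.bijective (fun x => by simp)
    have hr := rank_eq_of_equiv_equiv (R := ℂ) (R' := ℂ) (M := Γ)
      (M₁ := Submodule.map f Γ)
      (starRingEnd ℂ) e.toAddEquiv hbij
      (fun r m => e.map_smul' r m)
    have h2 : Module.finrank ℂ (Submodule.map f Γ) = Module.finrank ℂ Γ := by
      unfold Module.finrank; rw [hr]
    rw [h2, hdim]
  have hlag2 : IsLagrangian n (Submodule.map f Γ) := by
    refine ⟨hrank, ?_⟩
    rintro v ⟨x, hx, rfl⟩ w ⟨y, hy, rfl⟩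
    rw [hfapp, hfapp, omega_TT, hzero x hx y hy, map_zero]
  have hdisj : Disjoint Γ (Submodule.map f Γ) := by
    rw [Submodule.disjoint_def]
    intro x hx hx'
    have h0 : herm n x x = 0 := horth x hx x hx'
    have : (inner ℂ x x : ℂ) = 0 := by rw [inner_eq_conj_herm, h0, map_zero]
    exact inner_self_eq_zero.mp this
  have hVdim : Module.finrank ℂ (V n) = n + n := by
    rw [finrank_euclideanSpace]; simp
  have hcompl : IsCompl Γ (Submodule.map f Γ) := by
    refine ⟨hdisj, codisjoint_iff.mpr ?_⟩
    apply Submodule.eq_top_of_finrank_eq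
    have := Submodule.finrank_sup_add_finrank_inf_eq Γ (Submodule.map f Γ)
    rw [disjoint_iff.mp hdisj, finrank_bot, add_zero] at this
    rw [this, hdim, hrank, hVdim]
  refine ⟨hlag2, horth, hcompl, ?_⟩
  intro u hu huherm
  have key : ∀ a a' : Fin n ⊕ Fin n,
      herm n (Sum.elim u (fun i => Jmap n (conjMap n (u i))) a)
        (Sum.elim u (fun i => Jmap n (conjMap n (u i))) a') =
          if a = a' then 1 else 0 := by
    rintro (i | i) (j | j) <;> simp only [Sum.elim_inl, Sum.elim_inr]
    · rw [huherm]; simp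
    · rw [herm_T_right, hzero _ (hu i) _ (hu j)]; simp
    · rw [herm_conj, herm_T_right, hzero _ (hu j) _ (hu i)]; simp
    · rw [herm_TT, huherm]; simp [apply_ite]
  refine ⟨key, ?_, ?_⟩
  · have hon : Orthonormal ℂ (Sum.elim u (fun i => Jmap n (conjMap n (u i)))) := by
      rw [orthonormal_iff_ite]
      intro a a'
      rw [inner_eq_conj_herm, key a a']
      simp [apply_ite]
    exact hon.linearIndependent.span_eq_top_of_card_eq_finrank' (by simp [hVdim])
  · intro i j
    refine ⟨hzero _ (hu i) _ (hu j), ?_, ?_⟩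
    · rw [omega_TT, hzero _ (hu i) _ (hu j), map_zero]
    · rw [herm_eq_omega, huherm]
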